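/- Let f : W → ℝ² be continuously differentiable on W homeomorphic to D², and suppose det(J_f(w)) > 0 for all w ∈ W. Then for any regular value p ∈ ℝ² \ f(∂W), the cardinality of f⁻¹(p) equals the winding number of f(∂W) around p. In particular f⁻¹(p) is finite. -/

import Mathlib

open Set Metric

/-- `IsWindingNumber γ p n` : the loop `γ` (parametrized on `[0,1]`) winds `n` times
around `p`, expressed via a continuous choice of argument. -/
def IsWindingNumber (γ : ℝ → ℂ) (p : ℂ) (n : ℤ) : Prop :=
  ∃ θ : ℝ → ℝ, ContinuousOn θ (Set.Icc 0 1) ∧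
    (∀ t ∈ Set.Icc (0:ℝ) 1,
      γ t - p = (‖γ t - p‖ : ℂ) * Complex.exp ((θ t : ℂ) * Complex.I)) ∧
    θ 1 - θ 0 = 2 * Real.pi * n

section AuxiliaryLemmas
open Complex

private lemma continuousAt_of_eventually_or {G F₁ F₂ : ℂ → ℂ} {z₀ : ℂ}
    (h₁ : ContinuousAt F₁ z₀) (h₂ : ContinuousAt F₂ z₀) (heq : F₁ z₀ = F₂ z₀)
    (hG : ∀ᶠ z in nhds z₀, G z = F₁ z ∨ G z = F₂ z) (hGz : G z₀ = F₁ z₀) :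
    ContinuousAt G z₀ := by
  rw [ContinuousAt, hGz]
  rw [tendsto_iff_dist_tendsto_zero]
  apply squeeze_zero' (g := fun z => dist (F₁ z) (F₁ z₀) + dist (F₂ z) (F₁ z₀))
  · filter_upwards with z using dist_nonneg
  · filter_upwards [hG] with z hz
    rcases hz with h | h
    · rw [h]
      linarith [dist_nonneg (x := F₂ z) (y := F₁ z₀)]
    · rw [h]
      linarith [dist_nonneg (x := F₁ z) (y := F₁ z₀)]
  · have t1 : Filter.Tendsto (fun z => dist (F₁ z) (F₁ z₀)) (nhds z₀) (nhds 0) := by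
      have := h₁.dist (tendsto_const_nhds (x := F₁ z₀) (f := nhds z₀))
      simpa using this
    have t2 : Filter.Tendsto (fun z => dist (F₂ z) (F₁ z₀)) (nhds z₀) (nhds 0) := by
      have := h₂.dist (tendsto_const_nhds (x := F₁ z₀) (f := nhds z₀))
      rw [← heq] at this
      simpa [← heq] using this
    simpa using t1.add t2

private lemma re_pos_of_abs_sub_one_lt (q : ℂ) (h : ‖q - 1‖ < 1) : 0 < q.re := by
  have h2 : Complex.normSq (q - 1) < 1 := by
    have := Complex.sq_norm (q - 1)
    nlinarith [norm_nonneg (q - 1)]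
  have h3 : (q.re - 1)^2 + q.im^2 < 1 := by
    simpa [Complex.normSq_apply, Complex.sub_re, Complex.sub_im, sq] using h2
  nlinarith [sq_nonneg q.re, sq_nonneg q.im]

private lemma clamp_lipschitz (a c : ℝ) : |min (max a 0) 1 - min (max c 0) 1| ≤ |a - c| := by
  refine le_trans (abs_min_sub_min_le_max _ _ _ _) ?_
  have h1 : |max a 0 - max c 0| ≤ |a - c| := abs_max_sub_max_le_abs a c 0
  simpa using max_le h1 (abs_nonneg (a - c))

private lemma exists_log_closedBall (u : ↥(closedBall (0:ℂ) 1) → ℂ)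
    (hu : Continuous u) (hne : ∀ x, u x ≠ 0) :
    ∃ L : ↥(closedBall (0:ℂ) 1) → ℂ, Continuous L ∧ ∀ x, Complex.exp (L x) = u x := by
  haveI : CompactSpace ↥(closedBall (0:ℂ) 1) :=
    isCompact_iff_compactSpace.mp (isCompact_closedBall 0 1)
  haveI : Nonempty ↥(closedBall (0:ℂ) 1) :=
    ⟨⟨0, mem_closedBall_self zero_le_one⟩⟩
  obtain ⟨x₀, -, hx₀⟩ := isCompact_univ.exists_isMinOn univ_nonempty
    ((continuous_norm.comp hu).continuousOn)
  set m : ℝ := ‖u x₀‖ with hm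
  have hmpos : 0 < m := by simpa [hm] using (norm_pos_iff.mpr (hne x₀))
  have hmle : ∀ x, m ≤ ‖u x‖ := fun x => hx₀ (mem_univ x)
  have huc := CompactSpace.uniformContinuous_of_continuous hu
  rw [Metric.uniformContinuous_iff] at huc
  obtain ⟨δ, hδpos, hδ⟩ := huc m hmpos
  obtain ⟨n, hn⟩ := exists_nat_gt (1 / δ)
  have hnpos : (0:ℝ) < n := lt_trans (by positivity) hn
  have hinv : 1 / (n:ℝ) < δ := by
    rw [div_lt_iff₀ hnpos]
    rw [div_lt_iff₀ hδpos] at hn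
    nlinarith
  set c : ℕ → ℝ := fun j => min (max ((j:ℝ)/n) 0) 1 with hc
  have hcmem : ∀ (j : ℕ) (x : ↥(closedBall (0:ℂ) 1)), (c j • (x:ℂ)) ∈ closedBall (0:ℂ) 1 := by
    intro j x
    have hx : ‖(x:ℂ)‖ ≤ 1 := mem_closedBall_zero_iff.mp x.2
    rw [mem_closedBall_zero_iff, norm_smul]
    have h1 : |c j| ≤ 1 := by
      rw [abs_le]
      constructor
      · linarith [le_min (le_max_right ((j:ℝ)/n) 0) zero_le_one]
      · exact min_le_right _ _
    calc |c j| * ‖(x:ℂ)‖ ≤ 1 * 1 := mul_le_mul h1 hx (norm_nonneg _) zero_le_one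
      _ = 1 := by ring
  set pt : ℕ → ↥(closedBall (0:ℂ) 1) → ↥(closedBall (0:ℂ) 1) :=
    fun j x => ⟨c j • (x:ℂ), hcmem j x⟩ with hpt
  have hptcont : ∀ j, Continuous (pt j) := fun j =>
    Continuous.subtype_mk (f := fun x : ↥(closedBall (0:ℂ) 1) => c j • (x:ℂ))
      ((continuous_const_smul (c j)).comp continuous_subtype_val) (hcmem j)
  have hptdist : ∀ j x, dist (pt (j+1) x) (pt j x) < δ := by
    intro j x
    have hx : ‖(x:ℂ)‖ ≤ 1 := mem_closedBall_zero_iff.mp x.2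
    have key : |c (j+1) - c j| ≤ 1/n := by
      rw [hc]
      simp only []
      push_cast
      refine le_trans (clamp_lipschitz _ _) (le_of_eq ?_)
      rw [div_sub_div_same, show ((j:ℝ)+1) - j = 1 by ring, _root_.abs_of_nonneg (by positivity)]
    have h1 : dist (pt (j+1) x) (pt j x) = |c (j+1) - c j| * ‖(x:ℂ)‖ := by
      rw [Subtype.dist_eq, dist_eq_norm]
      show ‖c (j+1) • (x:ℂ) - c j • (x:ℂ)‖ = _
      rw [← sub_smul, norm_smul]
      rfl
    rw [h1]
    calc |c (j+1) - c j| * ‖(x:ℂ)‖ ≤ (1/n) * 1 :=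
          mul_le_mul key hx (norm_nonneg _) (by positivity)
      _ < δ := by rw [mul_one]; exact hinv
  have main : ∀ j : ℕ, ∃ L : ↥(closedBall (0:ℂ) 1) → ℂ,
      Continuous L ∧ ∀ x, Complex.exp (L x) = u (pt j x) := by
    intro j
    induction j with
    | zero =>
      refine ⟨fun _ => Complex.log (u (pt 0 x₀)), continuous_const, fun x => ?_⟩
      have hpt0 : pt 0 x = pt 0 x₀ := by
        apply Subtype.ext
        show c 0 • (x:ℂ) = c 0 • (x₀:ℂ)
        have : c 0 = 0 := by simp [hc]
        rw [this, zero_smul, zero_smul]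
      rw [Complex.exp_log (hne _), hpt0]
    | succ j ih =>
      obtain ⟨L, hL, hLeq⟩ := ih
      set q : ↥(closedBall (0:ℂ) 1) → ℂ := fun x => u (pt (j+1) x) / u (pt j x) with hq
      have hqre : ∀ x, 0 < (q x).re := by
        intro x
        apply re_pos_of_abs_sub_one_lt
        have hne' : u (pt j x) ≠ 0 := hne _
        have hq1 : q x - 1 = (u (pt (j+1) x) - u (pt j x)) / u (pt j x) := by
          simp only [hq]
          rw [div_sub_one hne']
        rw [hq1, norm_div]
        rw [div_lt_one (norm_pos_iff.mpr hne')]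
        calc ‖u (pt (j+1) x) - u (pt j x)‖
            = dist (u (pt (j+1) x)) (u (pt j x)) := by rw [Complex.dist_eq]
          _ < m := hδ (hptdist j x)
          _ ≤ ‖u (pt j x)‖ := hmle _
      have hqne : ∀ x, q x ≠ 0 := by
        intro x h0
        have := hqre x
        rw [h0] at this
        simp at this
      have hqcont : Continuous q :=
        ((hu.comp (hptcont (j+1))).div (hu.comp (hptcont j)) (fun x => hne _))
      refine ⟨fun x => L x + Complex.log (q x), ?_, fun x => ?_⟩
      · apply hL.add
        apply continuous_iff_continuousAt.mpr
        intro x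
        exact (continuousAt_clog (Or.inl (hqre x))).comp hqcont.continuousAt
      · rw [Complex.exp_add, hLeq, Complex.exp_log (hqne x), hq]
        rw [mul_comm, div_mul_cancel₀]
        exact hne _
  obtain ⟨L, hL, hLeq⟩ := main n
  refine ⟨L, hL, fun x => ?_⟩
  rw [hLeq]
  congr 1
  apply Subtype.ext
  show c n • (x:ℂ) = (x:ℂ)
  have : c n = 1 := by
    rw [hc]
    simp only []
    rw [div_self (ne_of_gt hnpos)]
    simp
  rw [this, one_smul]

private lemma lin_repr (A : ℂ →L[ℝ] ℂ) (u : ℂ) :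
    A u = (A 1 - I * A I) / 2 * u + (A 1 + I * A I) / 2 * (starRingEnd ℂ u) := by
  have hu : A u = u.re • A 1 + u.im • A I := by
    have : u = u.re • (1:ℂ) + u.im • I := by
      simp [Complex.real_smul, Complex.re_add_im]
    rw [show A u = A (u.re • (1:ℂ) + u.im • I) by rw [← this], map_add, map_smul, map_smul]
  rw [hu]
  apply Complex.ext <;>
    simp [Complex.real_smul, Complex.add_re, Complex.add_im, Complex.mul_re, Complex.mul_im,
      Complex.div_re, Complex.div_im, Complex.sub_re, Complex.sub_im, Complex.normSq_apply] <;>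
    ring

private lemma lin_det (A : ℂ →L[ℝ] ℂ) :
    A.det = normSq ((A 1 - I * A I) / 2) - normSq ((A 1 + I * A I) / 2) := by
  have h1 : A.det = LinearMap.det (A : ℂ →ₗ[ℝ] ℂ) := rfl
  rw [h1, ← LinearMap.det_toMatrix Complex.basisOneI, Matrix.det_fin_two]
  simp only [LinearMap.toMatrix_apply, Complex.coe_basisOneI_repr, ContinuousLinearMap.coe_coe]
  simp [Complex.basisOneI, Complex.normSq_apply, Complex.div_re, Complex.div_im,
    Complex.add_re, Complex.add_im, Complex.sub_re, Complex.sub_im, Complex.mul_re, Complex.mul_im]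
  ring

private lemma local_factor (f : ℂ → ℂ) (p w : ℂ) (r : ℝ) (hr : 0 < r)
    (hc : Continuous f) (A : ℂ →L[ℝ] ℂ) (hder : HasFDerivAt f A w)
    (hfw : f w = p) (hdet : 0 < A.det)
    (hne : ∀ z ∈ closedBall w r, z ≠ w → f z ≠ p) :
    ∃ Φ : ℂ → ℂ, Continuous Φ ∧ (∀ z ∈ closedBall w r, Φ z ≠ 0) ∧
      (∀ z, dist z w = r → Φ z = (f z - p) / (z - w)) := by
  set α : ℂ := (A 1 - I * A I) / 2 with hα
  set γ : ℂ := (A 1 + I * A I) / 2 with hγ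
  have hrepr : ∀ u : ℂ, A u = α * u + γ * (starRingEnd ℂ u) := fun u => lin_repr A u
  have hαγ : ‖γ‖ < ‖α‖ := by
    have h1 := lin_det A
    rw [← hα, ← hγ] at h1
    have h2 : normSq γ < normSq α := by rw [h1] at hdet; linarith
    have h3 : (‖γ‖)^2 < (‖α‖)^2 := by
      rw [Complex.sq_norm, Complex.sq_norm]; exact h2
    exact lt_of_pow_lt_pow_left₀ 2 (norm_nonneg α) h3
  have hα0 : α ≠ 0 := by
    intro h
    rw [h] at hαγ
    simp at hαγ
    exact absurd hαγ (by simpa [h] using (norm_nonneg γ).not_gt.mpr (le_of_lt (by simpa [h] using hαγ)))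
  -- the auxiliary functions
  set e : ℂ → ℂ := fun v => (f (w + v) - p - A v) / v with he
  set msc : ℂ → ℂ := fun u =>
    ((max (3 * ‖u‖ - 2*r) 0 / ‖u‖ : ℝ) : ℂ) * u with hmsc
  set co : ℂ → ℝ := fun z => min (max (3 * dist z w / r - 1) 0) 1 with hco
  set t1 : ℂ → ℂ := fun z =>
    Complex.exp (((min (3 * dist z w / r) 1 : ℝ) : ℂ) * Complex.log α) with ht1
  set t2 : ℂ → ℂ := fun z =>
    ((co z : ℝ) : ℂ) * γ * ((starRingEnd ℂ) (z - w) / (z - w)) with ht2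
  set Φ : ℂ → ℂ := fun z => t1 z + t2 z + e (msc (z - w)) with hΦ
  have he0 : e 0 = 0 := by simp [he, hfw]
  -- continuity of e
  have hecont : Continuous e := by
    rw [continuous_iff_continuousAt]
    intro v
    by_cases hv : v = 0
    · subst hv
      have hlo := hasFDerivAt_iff_isLittleO_nhds_zero.mp hder
      have ht : Filter.Tendsto e (nhds 0) (nhds 0) := by
        have := hlo.tendsto_div_nhds_zero
        apply this.congr
        intro v
        simp only [he, hfw]
      rw [ContinuousAt, he0]
      exact ht
    · apply ContinuousAt.div
      · exact (((hc.comp (continuous_const.add continuous_id)).sub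
          continuous_const).sub A.continuous).continuousAt
      · exact continuousAt_id
      · exact hv
  -- |msc u|
  have hmscabs : ∀ u : ℂ, ‖msc u‖ = max (3 * ‖u‖ - 2*r) 0 := by
    intro u
    by_cases hu : u = 0
    · subst hu
      simp [hmsc]
      linarith
    · simp only [hmsc]
      rw [norm_mul, Complex.norm_real, Real.norm_eq_abs, _root_.abs_of_nonneg
        (div_nonneg (le_max_right _ _) (norm_nonneg u)),
        div_mul_cancel₀ _ (norm_ne_zero_iff.mpr hu)]
  -- eventual vanish of msc near 0
  have hmsczero : ∀ u : ℂ, ‖u‖ ≤ 2*r/3 → msc u = 0 := by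
    intro u hu
    simp only [hmsc]
    rw [max_eq_right (by linarith), zero_div]
    simp
  have hmsccont : Continuous msc := by
    rw [continuous_iff_continuousAt]
    intro v
    by_cases hv : v = 0
    · subst hv
      apply Filter.EventuallyEq.continuousAt (y := 0)
      have hball : Metric.ball (0:ℂ) (2*r/3) ∈ nhds (0:ℂ) :=
        Metric.ball_mem_nhds 0 (by positivity)
      apply Filter.eventually_of_mem hball
      intro u hu
      apply hmsczero
      have := mem_ball_zero_iff.mp hu
      linarith
    · apply ContinuousAt.mul
      · apply Complex.continuous_ofReal.continuousAt.comp
        apply ContinuousAt.div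
        · exact ((continuous_const.mul continuous_norm).sub continuous_const).max
            continuous_const |>.continuousAt
        · exact continuous_norm.continuousAt
        · exact norm_ne_zero_iff.mpr hv
      · exact continuousAt_id
  -- continuity of t1
  have ht1cont : Continuous t1 := by
    apply Complex.continuous_exp.comp
    apply Continuous.mul _ continuous_const
    exact Complex.continuous_ofReal.comp
      (((continuous_const.mul (continuous_id.dist continuous_const)).div_const r).min
        continuous_const)
  -- continuity of t2
  have hcoz : ∀ z, dist z w ≤ r/3 → co z = 0 := by
    intro z hz
    simp only [hco]
    rw [max_eq_right, min_eq_left zero_le_one]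
    have : 3 * dist z w / r ≤ 1 := by
      rw [div_le_one hr]; linarith
    linarith
  have ht2cont : Continuous t2 := by
    rw [continuous_iff_continuousAt]
    intro z
    by_cases hz : z = w
    · apply Filter.EventuallyEq.continuousAt (y := 0)
      have hball : Metric.ball z (r/3) ∈ nhds z := Metric.ball_mem_nhds z (by positivity)
      apply Filter.eventually_of_mem hball
      intro y hy
      have hyd : dist y w < r/3 := by
        rw [← hz]
        simpa [mem_ball] using hy
      simp only [ht2]
      rw [hcoz y (le_of_lt hyd)]
      simp
    · have hzw : z - w ≠ 0 := sub_ne_zero.mpr hz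
      apply ContinuousAt.mul
      · apply ContinuousAt.mul _ continuousAt_const
        apply Complex.continuous_ofReal.continuousAt.comp
        simp only [hco]
        exact (((continuous_const.mul (continuous_id.dist continuous_const)).div_const r |>.sub
          continuous_const).max continuous_const).min continuous_const |>.continuousAt
      · exact ContinuousAt.div ((Complex.continuous_conj.comp
          (continuous_id.sub continuous_const)).continuousAt)
          ((continuous_id.sub continuous_const).continuousAt) hzw
  have hΦcont : Continuous Φ := by
    apply (ht1cont.add ht2cont).add
    exact hecont.comp (hmsccont.comp (continuous_id.sub continuous_const))
  -- key outer-region identity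
  have houter : ∀ z : ℂ, 2*r/3 < dist z w → Φ z = (f (w + msc (z - w)) - p) / msc (z - w) := by
    intro z hz
    have hd0 : 0 < dist z w := lt_trans (by positivity) hz
    have hzw : z - w ≠ 0 := by
      rw [Complex.dist_eq] at hd0
      intro h; rw [h] at hd0; simp at hd0
    have hdabs : dist z w = ‖z - w‖ := Complex.dist_eq z w
    set u := z - w with hu
    set d := ‖u‖ with hd
    have hdpos : 0 < d := by rw [hd]; exact norm_pos_iff.mpr hzw
    have hmax : max (3 * d - 2*r) 0 = 3*d - 2*r := by
      rw [max_eq_left]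
      rw [hdabs] at hz
      linarith [hz]
    set lam : ℝ := (3*d - 2*r) / d with hlam
    have hlampos : 0 < lam := by
      apply div_pos _ hdpos
      rw [hdabs] at hz; linarith
    have hmval : msc u = ((lam : ℝ) : ℂ) * u := by
      simp only [hmsc, hlam, ← hd, hmax]
    have hm0 : msc u ≠ 0 := by
      rw [hmval]
      exact mul_ne_zero (by exact_mod_cast ne_of_gt hlampos) hzw
    -- t1 = α
    have ht1v : t1 z = α := by
      simp only [ht1]
      rw [min_eq_right, Complex.ofReal_one, one_mul, Complex.exp_log hα0]
      rw [le_div_iff₀ hr]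
      rw [hdabs] at hz ⊢
      linarith
    -- co = 1
    have hcov : co z = 1 := by
      simp only [hco]
      rw [min_eq_right]
      rw [le_max_iff]
      left
      rw [le_sub_iff_add_le, le_div_iff₀ hr]
      rw [hdabs] at hz ⊢
      linarith
    -- A u / u = α + γ ū/u
    have hAdiv : A u / u = α + γ * ((starRingEnd ℂ) u / u) := by
      rw [hrepr u]
      field_simp
    have hAm : A (msc u) = ((lam:ℝ):ℂ) * A u := by
      have hsm : ((lam:ℝ):ℂ) * u = lam • u := by rw [Complex.real_smul]
      rw [hmval, hsm, map_smul, Complex.real_smul]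
    have hAdiv2 : A (msc u) / msc u = A u / u := by
      rw [hAm, hmval, mul_div_mul_left]
      exact_mod_cast ne_of_gt hlampos
    simp only [hΦ]
    rw [ht1v]
    simp only [ht2]
    rw [hcov]
    simp only [Complex.ofReal_one, one_mul]
    rw [← hAdiv, ← hAdiv2]
    simp only [he]
    rw [sub_div, sub_div]
    ring
  have hsphere : ∀ z, dist z w = r → Φ z = (f z - p) / (z - w) := by
    intro z hzr
    have h23 : 2*r/3 < dist z w := by rw [hzr]; linarith
    rw [houter z h23]
    have habs : ‖z - w‖ = r := by rw [← Complex.dist_eq]; exact hzr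
    have hmv : msc (z - w) = z - w := by
      simp only [hmsc, habs]
      rw [max_eq_left (by linarith), show 3*r - 2*r = r by ring, div_self (ne_of_gt hr)]
      simp
    rw [hmv, add_sub_cancel]
  refine ⟨Φ, hΦcont, ?_, hsphere⟩
  intro z hzball
  have hdler : dist z w ≤ r := mem_closedBall.mp hzball
  have habs : ‖z - w‖ = dist z w := (Complex.dist_eq z w).symm
  rcases le_or_gt (dist z w) (r/3) with hcase1 | hcase1
  · -- region 1 : Φ = t1 ≠ 0
    have h2 : t2 z = 0 := by
      simp only [ht2]
      rw [hcoz z hcase1]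
      simp
    have h3 : msc (z - w) = 0 := by
      apply hmsczero
      rw [habs]; linarith
    simp only [hΦ]
    rw [h2, h3, he0, add_zero, add_zero]
    simp only [ht1]
    exact Complex.exp_ne_zero _
  · rcases le_or_gt (dist z w) (2*r/3) with hcase2 | hcase2
    · -- region 2 : Φ = α + t2, |t2| ≤ |γ| < |α|
      have ht1v : t1 z = α := by
        simp only [ht1]
        rw [min_eq_right, Complex.ofReal_one, one_mul, Complex.exp_log hα0]
        rw [le_div_iff₀ hr]
        linarith
      have h3 : msc (z - w) = 0 := by
        apply hmsczero
        rw [habs]; linarith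
      have ht2abs : ‖t2 z‖ ≤ ‖γ‖ := by
        simp only [ht2]
        rw [norm_mul, norm_mul, Complex.norm_real, Real.norm_eq_abs]
        have hco01 : |co z| ≤ 1 := by
          simp only [hco]
          rw [abs_le]
          constructor
          · have := le_max_right (3 * dist z w / r - 1) 0
            have := le_min this zero_le_one
            linarith [le_min (le_max_right (3 * dist z w / r - 1) 0) zero_le_one]
          · exact min_le_right _ _
        have hdivle : ‖(starRingEnd ℂ) (z - w) / (z - w)‖ ≤ 1 := by
          rw [norm_div, Complex.norm_conj]
          by_cases hzw : z - w = 0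
          · rw [hzw]; simp
          · rw [div_self (norm_ne_zero_iff.mpr hzw)]
        calc |co z| * ‖γ‖ * ‖(starRingEnd ℂ) (z - w) / (z - w)‖
            ≤ 1 * ‖γ‖ * 1 := by
              apply mul_le_mul _ hdivle (norm_nonneg _)
                (by positivity)
              apply mul_le_mul hco01 (le_refl _) (norm_nonneg _) zero_le_one
          _ = ‖γ‖ := by ring
      simp only [hΦ]
      rw [ht1v, h3, he0, add_zero]
      intro hzero
      have hα_eq : α = -(t2 z) := eq_neg_of_add_eq_zero_left hzero
      have hcontr : ‖α‖ ≤ ‖γ‖ := by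
        rw [hα_eq, norm_neg]
        exact ht2abs
      linarith
    · -- region 3
      rw [houter z hcase2]
      set m := msc (z - w) with hm
      have hmabs : ‖m‖ = 3 * dist z w - 2*r := by
        rw [hm, hmscabs, habs]
        rw [max_eq_left (by linarith)]
      have hm0 : m ≠ 0 := by
        intro h
        rw [h] at hmabs
        simp at hmabs
        linarith
      apply div_ne_zero _ hm0
      apply sub_ne_zero.mpr
      apply hne
      · rw [mem_closedBall]
        have : dist (w + m) w = ‖m‖ := by
          rw [Complex.dist_eq]
          congr 1
          ring
        rw [this, hmabs]
        linarith
      · intro h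
        apply hm0
        have : m = 0 := by
          have := congrArg (fun x => x - w) h
          simpa using this
        exact this

private lemma preimage_finite (W : Set ℂ) (hW : IsCompact W)
    (f : ℂ → ℂ) (hf : ContDiff ℝ 1 f)
    (hdet : ∀ w ∈ W, 0 < (fderiv ℝ f w).det) (p : ℂ) :
    (W ∩ f ⁻¹' {p}).Finite := by
  set S := W ∩ f ⁻¹' {p} with hS
  have hScl : IsClosed S :=
    hW.isClosed.inter (isClosed_singleton.preimage hf.continuous)
  have hScpt : IsCompact S := hW.of_isClosed_subset hScl inter_subset_left
  have hiso : ∀ z ∈ S, ∃ ε > 0, ∀ y ∈ S, dist y z < ε → y = z := by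
    intro z hz
    have hz1 : z ∈ W := hz.1
    have hz2 : f z = p := hz.2
    have hd : 0 < (fderiv ℝ f z).det := hdet z hz1
    set A := fderiv ℝ f z with hA
    have hdne : LinearMap.det (A : ℂ →ₗ[ℝ] ℂ) ≠ 0 := by
      have : A.det = LinearMap.det (A : ℂ →ₗ[ℝ] ℂ) := rfl
      rw [← this]
      exact ne_of_gt hd
    set E : ℂ ≃L[ℝ] ℂ := ((A : ℂ →ₗ[ℝ] ℂ).equivOfDetNeZero hdne).toContinuousLinearEquiv with hE
    have hcoe : (E : ℂ →L[ℝ] ℂ) = A := by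
      ext u
      rfl
    have hstrict : HasStrictFDerivAt f (E : ℂ →L[ℝ] ℂ) z := by
      rw [hcoe, hA]
      exact hf.hasStrictFDerivAt one_ne_zero
    set ph := hstrict.toOpenPartialHomeomorph f with hph
    have hsrc : z ∈ ph.source := hstrict.mem_toOpenPartialHomeomorph_source
    obtain ⟨ε, hεpos, hball⟩ := Metric.isOpen_iff.mp ph.open_source z hsrc
    refine ⟨ε, hεpos, fun y hy hdy => ?_⟩
    have hy_src : y ∈ ph.source := hball (by simpa [mem_ball] using hdy)
    apply ph.injOn hy_src hsrc
    show ph y = ph z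
    have hcoe2 : (ph : ℂ → ℂ) = f := hstrict.toOpenPartialHomeomorph_coe
    rw [hcoe2, hy.2, hz2]
  -- finite subcover
  classical
  choose! ε hεpos hεkey using hiso
  have hcover : S ⊆ ⋃ z ∈ S, Metric.ball z (ε z) := by
    intro y hy
    exact mem_biUnion hy (mem_ball_self (hεpos y hy))
  obtain ⟨t, hts, htfin, htcov⟩ := hScpt.elim_finite_subcover_image
    (fun z hz => Metric.isOpen_ball) hcover
  apply htfin.subset (t := S)
  intro y hy
  obtain ⟨z, hz, hyz⟩ := mem_iUnion₂.mp (htcov hy)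
  have : y = z := hεkey z (hts hz) y hy (by simpa [mem_ball] using hyz)
  rwa [this]

end AuxiliaryLemmas

/-- Let `f` be C¹ on `W` homeomorphic to the closed disk `D²`, with `det J_f > 0` on `W`.
Let `b` be a (counterclockwise) loop parametrizing `∂W`: it traverses `frontier W` and winds
once around every interior point of `W`. Then for every point `p ∉ f(∂W)`, the number of
preimages of `p` in `W` is finite and equals the winding number of the cycle `f(∂W)`
around `p`. -/
theorem card_preimage_eq_windingNumber (W : Set ℂ)
    (hhomeo : Nonempty (W ≃ₜ (closedBall (0:ℂ) 1)))
    (b : ℝ → ℂ) (hb : ContinuousOn b (Set.Icc 0 1)) (hbloop : b 0 = b 1)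
    (hbim : b '' Set.Icc 0 1 = frontier W)
    (hborient : ∀ q ∈ W \ frontier W, IsWindingNumber b q 1)
    (f : ℂ → ℂ) (hf : ContDiff ℝ 1 f)
    (hdet : ∀ w ∈ W, 0 < (fderiv ℝ f w).det)
    (p : ℂ) (hp : p ∉ f '' frontier W) :
    ∃ hfin : (W ∩ f ⁻¹' {p}).Finite,
      IsWindingNumber (fun t => f (b t)) p (hfin.toFinset.card : ℤ) := by
  classical
  obtain ⟨e⟩ := hhomeo
  haveI hcb : CompactSpace ↥(closedBall (0:ℂ) 1) :=
    isCompact_iff_compactSpace.mp (isCompact_closedBall 0 1)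
  haveI hWc : CompactSpace ↥W := e.symm.compactSpace
  have hWcpt : IsCompact W := isCompact_iff_compactSpace.mpr hWc
  have hWcl : IsClosed W := hWcpt.isClosed
  have hfrW : frontier W ⊆ W := hWcl.frontier_subset
  have hfin : (W ∩ f ⁻¹' {p}).Finite := preimage_finite W hWcpt f hf hdet p
  refine ⟨hfin, ?_⟩
  set T := hfin.toFinset with hT
  have hTmem : ∀ w, w ∈ T ↔ w ∈ W ∩ f ⁻¹' {p} := fun w => hfin.mem_toFinset
  -- preimages are interior
  have hSint : ∀ w ∈ T, w ∈ interior W := by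
    intro w hw
    rw [hTmem] at hw
    rw [← self_diff_frontier]
    refine ⟨hw.1, fun hfr => hp ⟨w, hfr, hw.2⟩⟩
  have hint_fr : ∀ z ∈ frontier W, z ∉ interior W := by
    intro z hz hi
    rw [← self_diff_frontier] at hi
    exact hi.2 hz
  -- radii
  have hrad_ex : ∀ w ∈ T, ∃ ρ, 0 < ρ ∧ closedBall w ρ ⊆ interior W := by
    intro w hw
    obtain ⟨ρ, hρpos, hball⟩ := Metric.isOpen_iff.mp isOpen_interior w (hSint w hw)
    exact ⟨ρ/2, by positivity,
      subset_trans (closedBall_subset_ball (by linarith)) hball⟩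
  set ε : ℂ → ℝ := fun w =>
    if h : ∃ ρ, 0 < ρ ∧ closedBall w ρ ⊆ interior W then h.choose else 1 with hε
  have hεpos : ∀ w ∈ T, 0 < ε w := by
    intro w hw
    simp only [hε]
    rw [dif_pos (hrad_ex w hw)]
    exact (hrad_ex w hw).choose_spec.1
  have hεball : ∀ w ∈ T, closedBall w (ε w) ⊆ interior W := by
    intro w hw
    simp only [hε]
    rw [dif_pos (hrad_ex w hw)]
    exact (hrad_ex w hw).choose_spec.2
  set dsep : ℂ → ℝ := fun w =>
    if h : (T.erase w).Nonempty then (T.erase w).inf' h (fun w' => dist w w') else 1 with hdsep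
  have hdsep_pos : ∀ w ∈ T, 0 < dsep w := by
    intro w hw
    simp only [hdsep]
    by_cases h : (T.erase w).Nonempty
    · rw [dif_pos h]
      rw [Finset.lt_inf'_iff]
      intro w' hw'
      exact dist_pos.mpr (Ne.symm (Finset.mem_erase.mp hw').1)
    · rw [dif_neg h]; norm_num
  have hdsep_le : ∀ w ∈ T, ∀ w' ∈ T, w' ≠ w → dsep w ≤ dist w w' := by
    intro w hw w' hw' hne
    simp only [hdsep]
    have hne' : (T.erase w).Nonempty := ⟨w', Finset.mem_erase.mpr ⟨hne, hw'⟩⟩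
    rw [dif_pos hne']
    exact Finset.inf'_le _ (Finset.mem_erase.mpr ⟨hne, hw'⟩)
  set rad : ℂ → ℝ := fun w => min (ε w) (dsep w / 3) with hrad
  have hradpos : ∀ w ∈ T, 0 < rad w := fun w hw =>
    lt_min (hεpos w hw) (by linarith [hdsep_pos w hw])
  have hradball : ∀ w ∈ T, closedBall w (rad w) ⊆ interior W := fun w hw =>
    subset_trans (closedBall_subset_closedBall (min_le_left _ _)) (hεball w hw)
  have hdisj : ∀ w ∈ T, ∀ w' ∈ T, w ≠ w' → ∀ z, dist z w ≤ rad w → ¬(dist z w' ≤ rad w') := by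
    intro w hw w' hw' hne z hzw hzw'
    have h1 : rad w ≤ dsep w / 3 := min_le_right _ _
    have h2 : rad w' ≤ dsep w' / 3 := min_le_right _ _
    have h3 : dsep w ≤ dist w w' := hdsep_le w hw w' hw' (Ne.symm hne)
    have h4 : dsep w' ≤ dist w' w := hdsep_le w' hw' w hw hne
    have h5 : dist w w' ≤ dist z w + dist z w' := by
      rw [dist_comm z w]
      exact dist_triangle w z w'
    have h6 : 0 < dist w w' := dist_pos.mpr hne
    rw [dist_comm w' w] at h4
    linarith
  have hballS : ∀ w ∈ T, ∀ z, dist z w ≤ rad w → z ≠ w → z ∉ W ∩ f ⁻¹' {p} := by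
    intro w hw z hz hzw hzS
    have hzT : z ∈ T := (hTmem z).mpr hzS
    have := hdisj w hw z hzT (Ne.symm hzw) z hz
    simp [hradpos z hzT, le_of_lt (hradpos z hzT)] at this
  -- local factors
  have hΦex : ∀ w ∈ T, ∃ Φ : ℂ → ℂ, Continuous Φ ∧
      (∀ z ∈ closedBall w (rad w), Φ z ≠ 0) ∧
      (∀ z, dist z w = rad w → Φ z = (f z - p) / (z - w)) := by
    intro w hw
    apply local_factor f p w (rad w) (hradpos w hw) hf.continuous (fderiv ℝ f w)
      ((hf.differentiable one_ne_zero) w).hasFDerivAt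
      (by simpa using ((hTmem w).mp hw).2)
      (hdet w ((hTmem w).mp hw).1)
    intro z hz hzw hfz
    have hzW : z ∈ W := interior_subset (hradball w hw hz)
    exact hballS w hw z (mem_closedBall.mp hz) hzw ⟨hzW, by simpa using hfz⟩
  choose! Φf hΦcont hΦne hΦsph using hΦex
  -- the global function G
  set ratio : ℂ → ℂ := fun z => (f z - p) / ∏ w ∈ T, (z - w) with hratio
  set G : ℂ → ℂ := fun z =>
    if h : ∃ w, w ∈ T ∧ dist z w ≤ rad w then
      Φf h.choose z / ∏ w' ∈ T.erase h.choose, (z - w')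
    else ratio z with hG
  have huniq : ∀ z w, w ∈ T → dist z w ≤ rad w →
      ∀ w', w' ∈ T → dist z w' ≤ rad w' → w' = w := by
    intro z w hw hzw w' hw' hzw'
    by_contra hne
    exact hdisj w' hw' w hw hne z hzw' hzw
  have hGin : ∀ z w, w ∈ T → dist z w ≤ rad w →
      G z = Φf w z / ∏ w' ∈ T.erase w, (z - w') := by
    intro z w hw hzw
    have hex : ∃ w, w ∈ T ∧ dist z w ≤ rad w := ⟨w, hw, hzw⟩
    simp only [hG]
    rw [dif_pos hex]
    have := huniq z w hw hzw hex.choose hex.choose_spec.1 hex.choose_spec.2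
    rw [this]
  have hGout : ∀ z, (∀ w ∈ T, ¬ dist z w ≤ rad w) → G z = ratio z := by
    intro z hz
    simp only [hG]
    rw [dif_neg]
    rintro ⟨w, hw, hzw⟩
    exact hz w hw hzw
  -- on the frontier
  have hfr_far : ∀ z ∈ frontier W, ∀ w ∈ T, ¬ dist z w ≤ rad w := by
    intro z hz w hw hle
    exact hint_fr z hz (hradball w hw (mem_closedBall.mpr hle))
  have hfr_ne : ∀ z ∈ frontier W, ∀ w ∈ T, z ≠ w := by
    intro z hz w hw h
    subst h
    exact hint_fr z hz (hSint z hw)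
  have hprod_ne : ∀ z ∈ frontier W, (∏ w ∈ T, (z - w)) ≠ 0 := by
    intro z hz
    rw [Finset.prod_ne_zero_iff]
    intro w hw
    exact sub_ne_zero.mpr (hfr_ne z hz w hw)
  have hGfr : ∀ z ∈ frontier W, G z * ∏ w ∈ T, (z - w) = f z - p := by
    intro z hz
    rw [hGout z (hfr_far z hz), hratio]
    simp only []
    rw [div_mul_cancel₀ _ (hprod_ne z hz)]
  -- continuity of G on W
  have hGcont : ContinuousOn G W := by
    intro z₀ hz₀W
    apply ContinuousAt.continuousWithinAt
    by_cases hex : ∃ w, w ∈ T ∧ dist z₀ w ≤ rad w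
    · obtain ⟨w₀, hw₀, hd₀⟩ := hex
      have hfar : ∀ w' ∈ T.erase w₀, rad w' < dist z₀ w' := by
        intro w' hw'
        obtain ⟨hne', hw'T⟩ := Finset.mem_erase.mp hw'
        by_contra hcon
        push_neg at hcon
        exact hdisj w₀ hw₀ w' hw'T (Ne.symm hne') z₀ hd₀ hcon
      have hz₀ne : ∀ w' ∈ T.erase w₀, z₀ ≠ w' := by
        intro w' hw' h
        have h2 := hfar w' hw'
        rw [h] at h2
        simp only [dist_self] at h2
        exact absurd h2 (not_lt.mpr (le_of_lt (hradpos w' (Finset.mem_erase.mp hw').2)))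
      set F₁ : ℂ → ℂ := fun z => Φf w₀ z / ∏ w' ∈ T.erase w₀, (z - w') with hF₁def
      have hprodcont : ∀ s : Finset ℂ, Continuous (fun z : ℂ => ∏ w' ∈ s, (z - w')) := by
        intro s
        apply continuous_finset_prod
        intro w' _
        exact continuous_id.sub continuous_const
      have hprod1ne : (∏ w' ∈ T.erase w₀, (z₀ - w')) ≠ 0 := by
        rw [Finset.prod_ne_zero_iff]
        intro w' hw'
        exact sub_ne_zero.mpr (hz₀ne w' hw')
      have hF₁ : ContinuousAt F₁ z₀ :=
        ContinuousAt.div (hΦcont w₀ hw₀).continuousAt (hprodcont _).continuousAt hprod1ne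
      have hVev : ∀ᶠ z in nhds z₀, ∀ w' ∈ T.erase w₀, rad w' < dist z w' := by
        rw [Finset.eventually_all]
        intro w' hw'
        exact (isOpen_lt continuous_const
          (continuous_id.dist continuous_const)).mem_nhds (hfar w' hw')
      have hGalt : ∀ z, (∀ w' ∈ T.erase w₀, rad w' < dist z w') →
          G z = F₁ z ∨ G z = ratio z := by
        intro z hV
        by_cases hc : dist z w₀ ≤ rad w₀
        · exact Or.inl (hGin z w₀ hw₀ hc)
        · refine Or.inr (hGout z ?_)
          intro w hw hcc
          by_cases hww : w = w₀
          · rw [hww] at hcc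
            exact hc hcc
          · exact absurd hcc (not_le.mpr (hV w (Finset.mem_erase.mpr ⟨hww, hw⟩)))
      rcases lt_or_eq_of_le hd₀ with hlt | heqq
      · have hev : G =ᶠ[nhds z₀] F₁ := by
          have hopen : IsOpen {z : ℂ | dist z w₀ < rad w₀} :=
            isOpen_lt (continuous_id.dist continuous_const) continuous_const
          filter_upwards [hopen.mem_nhds hlt] with z hz
          exact hGin z w₀ hw₀ (le_of_lt hz)
        exact hF₁.congr hev.symm
      · have hz₀neT : ∀ w ∈ T, z₀ ≠ w := by
          intro w hw h
          by_cases hww : w = w₀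
          · rw [hww] at h
            rw [h] at heqq
            simp only [dist_self] at heqq
            exact absurd heqq.symm (ne_of_gt (hradpos w₀ hw₀))
          · exact hz₀ne w (Finset.mem_erase.mpr ⟨hww, hw⟩) h
        have hprodTne : (∏ w ∈ T, (z₀ - w)) ≠ 0 := by
          rw [Finset.prod_ne_zero_iff]
          intro w hw
          exact sub_ne_zero.mpr (hz₀neT w hw)
        have hF₂ : ContinuousAt ratio z₀ := by
          apply ContinuousAt.div
          · exact (hf.continuous.sub continuous_const).continuousAt
          · exact (hprodcont T).continuousAt
          · exact hprodTne
        have heqv : F₁ z₀ = ratio z₀ := by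
          rw [hF₁def]
          simp only []
          rw [hΦsph w₀ hw₀ z₀ heqq, hratio, div_div, Finset.mul_prod_erase T _ hw₀]
        apply continuousAt_of_eventually_or hF₁ hF₂ heqv
        · filter_upwards [hVev] with z hz
          exact hGalt z hz
        · exact hGin z₀ w₀ hw₀ hd₀
    · have hfar : ∀ w ∈ T, rad w < dist z₀ w := by
        intro w hw
        by_contra h
        push_neg at h
        exact hex ⟨w, hw, h⟩
      have hz₀neT : ∀ w ∈ T, z₀ ≠ w := by
        intro w hw h
        have h2 := hfar w hw
        rw [h] at h2
        simp only [dist_self] at h2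
        exact absurd h2 (not_lt.mpr (le_of_lt (hradpos w hw)))
      have hev : G =ᶠ[nhds z₀] ratio := by
        have hall : ∀ᶠ z in nhds z₀, ∀ w ∈ T, rad w < dist z w := by
          rw [Finset.eventually_all]
          intro w hw
          exact (isOpen_lt continuous_const
            (continuous_id.dist continuous_const)).mem_nhds (hfar w hw)
        filter_upwards [hall] with z hz
        exact hGout z fun w hw hc => absurd hc (not_le.mpr (hz w hw))
      have hrat : ContinuousAt ratio z₀ := by
        apply ContinuousAt.div
        · exact (hf.continuous.sub continuous_const).continuousAt
        · exact (continuous_finset_prod _ fun w' _ =>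
            continuous_id.sub continuous_const).continuousAt
        · rw [Finset.prod_ne_zero_iff]
          intro w hw
          exact sub_ne_zero.mpr (hz₀neT w hw)
      exact hrat.congr hev.symm
  -- nonvanishing of G on W
  have hGne : ∀ z ∈ W, G z ≠ 0 := by
    intro z hzW
    by_cases hex : ∃ w, w ∈ T ∧ dist z w ≤ rad w
    · obtain ⟨w₀, hw₀, hd₀⟩ := hex
      rw [hGin z w₀ hw₀ hd₀]
      apply div_ne_zero
      · exact hΦne w₀ hw₀ z (mem_closedBall.mpr hd₀)
      · rw [Finset.prod_ne_zero_iff]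
        intro w' hw'
        obtain ⟨hww, hw'T⟩ := Finset.mem_erase.mp hw'
        have hfar := hdisj w₀ hw₀ w' hw'T (Ne.symm hww) z hd₀
        intro h0
        apply hfar
        rw [show z = w' from sub_eq_zero.mp h0]
        simp [le_of_lt (hradpos w' hw'T)]
    · rw [hGout z (fun w hw h => hex ⟨w, hw, h⟩)]
      apply div_ne_zero
      · apply sub_ne_zero.mpr
        intro hfz
        have hzT : z ∈ T := (hTmem z).mpr ⟨hzW, by simp [hfz]⟩
        exact hex ⟨z, hzT, by simp [le_of_lt (hradpos z hzT)]⟩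
      · rw [Finset.prod_ne_zero_iff]
        intro w hw
        apply sub_ne_zero.mpr
        intro h
        exact hex ⟨w, hw, by rw [h]; simp [le_of_lt (hradpos w hw)]⟩
  -- logarithm
  have hlog : ∃ Λ' : ℂ → ℂ, ContinuousOn Λ' W ∧
      ∀ z ∈ W, Complex.exp (Λ' z) = G z := by
    have hGr : Continuous (W.restrict G) := continuousOn_iff_continuous_restrict.mp hGcont
    set u : ↥(closedBall (0:ℂ) 1) → ℂ := fun x => W.restrict G (e.symm x) with hu
    have hucont : Continuous u := hGr.comp e.symm.continuous
    have hune : ∀ x, u x ≠ 0 := fun x => hGne _ (e.symm x).2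
    obtain ⟨L, hL, hLexp⟩ := exists_log_closedBall u hucont hune
    refine ⟨fun z => if h : z ∈ W then L (e ⟨z, h⟩) else 0, ?_, ?_⟩
    · rw [continuousOn_iff_continuous_restrict]
      have hres : W.domRestrict (fun z => if h : z ∈ W then L (e ⟨z, h⟩) else 0)
          = fun x => L (e x) := by
        funext x
        simp only [Set.domRestrict_apply]
        rw [dif_pos x.2]
      rw [hres]
      exact hL.comp e.continuous
    · intro z hz
      show Complex.exp (dite (z ∈ W) (fun h => L (e ⟨z, h⟩)) (fun _ => 0)) = G z
      rw [dif_pos hz]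
      rw [hLexp (e ⟨z, hz⟩)]
      show W.restrict G (e.symm (e ⟨z, hz⟩)) = G z
      rw [e.symm_apply_apply]
      rfl
  obtain ⟨Λ', hΛ'cont, hΛ'exp⟩ := hlog
  -- windings of b around the preimages
  have hwind : ∀ w ∈ T, IsWindingNumber b w 1 := by
    intro w hw
    apply hborient
    rw [← self_diff_frontier] at hSint
    exact hSint w hw
  choose! θw hθcont hθeq hθend using hwind
  -- the lifted argument
  set θ : ℝ → ℝ := fun t => (Λ' (b t)).im + ∑ w ∈ T, θw w t with hθ
  have hmaps : MapsTo b (Set.Icc 0 1) W := by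
    intro t ht
    apply hfrW
    rw [← hbim]
    exact mem_image_of_mem b ht
  have hbfr : ∀ t ∈ Set.Icc (0:ℝ) 1, b t ∈ frontier W := by
    intro t ht
    rw [← hbim]
    exact mem_image_of_mem b ht
  refine ⟨θ, ?_, ?_, ?_⟩
  · -- continuity
    apply ContinuousOn.add
    · exact Complex.continuous_im.comp_continuousOn (hΛ'cont.comp hb hmaps)
    · apply continuousOn_finset_sum
      intro w hw
      exact hθcont w hw
  · -- the winding equation
    intro t ht
    set z := b t with hz
    have hzfr : z ∈ frontier W := hbfr t ht
    have hzW : z ∈ W := hfrW hzfr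
    set Z : ℂ := Λ' z + ∑ w ∈ T, ((Real.log (‖z - w‖) : ℂ) + (θw w t : ℂ) * Complex.I) with hZ
    have key1 : Complex.exp Z = f z - p := by
      rw [hZ, Complex.exp_add, Complex.exp_sum]
      have hterm : ∀ w ∈ T, Complex.exp ((Real.log (‖z - w‖) : ℂ) + (θw w t : ℂ) * Complex.I)
          = z - w := by
        intro w hw
        rw [Complex.exp_add, ← Complex.ofReal_exp,
          Real.exp_log (norm_pos_iff.mpr (sub_ne_zero.mpr (hfr_ne z hzfr w hw)))]
        exact ((hθeq w hw) t ht).symm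
      rw [Finset.prod_congr rfl hterm, hΛ'exp z hzW]
      exact hGfr z hzfr
    have hZim : Z.im = θ t := by
      rw [hZ, hθ]
      simp [Complex.add_im, Complex.ofReal_im, Complex.mul_im, Complex.I_re, Complex.I_im,
        Complex.ofReal_re, hz]
    show f z - p = (‖f z - p‖ : ℂ) * Complex.exp ((θ t : ℂ) * Complex.I)
    rw [← key1, Complex.norm_exp, ← hZim, Complex.ofReal_exp, ← Complex.exp_add]
    congr 1
    rw [Complex.re_add_im]
  · -- endpoints
    have h0 : (0:ℝ) ∈ Set.Icc (0:ℝ) 1 := by norm_num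
    have h1 : (1:ℝ) ∈ Set.Icc (0:ℝ) 1 := by norm_num
    rw [hθ]
    simp only []
    rw [← hbloop]
    have hsum : (∑ w ∈ T, θw w 1) - (∑ w ∈ T, θw w 0) = ∑ w ∈ T, (θw w 1 - θw w 0) :=
      (Finset.sum_sub_distrib ..).symm
    have hval : ∀ w ∈ T, θw w 1 - θw w 0 = 2 * Real.pi := by
      intro w hw
      have := hθend w hw
      simpa using this
    have : (∑ w ∈ T, θw w 1) - (∑ w ∈ T, θw w 0) = T.card * (2 * Real.pi) := by
      rw [hsum, Finset.sum_congr rfl hval, Finset.sum_const, nsmul_eq_mul]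
    push_cast
    push_cast at this
    linarith
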